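/- arXiv:1708.05754 — 3 statements merged into one kernel-verified Lean document; each statement's English description precedes it below -/
import Mathlib

section
/- Let 0 < r < R be real numbers and let f : ℂ → ℂ be analytic on an open set containing the closed ball of radius R centered at 0. Assume f(0) ≠ 0 and that |f(z)| ≤ M for all z with |z| ≤ R, where M > 0. Then the zero set Z = {z : |z| ≤ r and f(z) = 0} is finite and its cardinality satisfies (card Z) · log(R/r) ≤ log(M/|f(0)|). -/
open Metric Set

/-- Key induction: dividing out zeros one at a time using Blaschke-type factors. -/
lemma jensen_key {r R M : ℝ} (hr : 0 < r) (hrR : r < R) (hM : 0 ≤ M) :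
    ∀ (S : Finset ℂ) (f : ℂ → ℂ), DiffContOnCl ℂ f (Metric.ball 0 R) →
      (∀ z ∈ Metric.closedBall (0 : ℂ) R, ‖f z‖ ≤ M) →
      (∀ a ∈ S, ‖a‖ ≤ r ∧ f a = 0) →
      ‖f 0‖ ≤ M * (r / R) ^ S.card := by
  have hR : (0 : ℝ) < R := hr.trans hrR
  intro S
  induction S using Finset.induction with
  | empty =>
    intro f _ hbd _
    simpa using hbd 0 (by simp [hR.le])
  | @insert a s ha ih =>
    intro f hf hbd hzero
    have haz : ‖a‖ ≤ r ∧ f a = 0 := hzero a (Finset.mem_insert_self a s)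
    have har : ‖a‖ ≤ r := haz.1
    have hfa : f a = 0 := haz.2
    by_cases h0 : f 0 = 0
    · rw [h0]
      simp only [norm_zero]
      positivity
    -- a ≠ 0 since f a = 0 ≠ f 0
    have ha0 : a ≠ 0 := by rintro rfl; exact h0 hfa
    have haball : a ∈ Metric.ball (0 : ℂ) R := by
      simp only [Metric.mem_ball, Complex.dist_eq, sub_zero]
      exact lt_of_le_of_lt har hrR
    set g : ℂ → ℂ := dslope f a with hg
    set F : ℂ → ℂ := fun z => ((R : ℂ) ^ 2 - (starRingEnd ℂ a) * z) / R * g z with hF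
    -- g is differentiable on the ball
    have hgd : DifferentiableOn ℂ g (Metric.ball 0 R) :=
      (Complex.differentiableOn_dslope (isOpen_ball.mem_nhds haball)).mpr hf.differentiableOn
    -- g is continuous on the closed ball
    have hgc : ContinuousOn g (Metric.closedBall 0 R) := by
      intro z hz
      rcases eq_or_ne z a with rfl | hza
      · exact ((hgd.differentiableAt (isOpen_ball.mem_nhds haball)).continuousAt).continuousWithinAt
      · have hslope : ContinuousWithinAt (fun w => (w - a)⁻¹ • (f w - f a))
            (Metric.closedBall 0 R) z := by
          refine ContinuousWithinAt.smul (f := fun w => (w - a)⁻¹) (g := fun w => f w - f a) ?_ ?_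
          · exact ((continuousWithinAt_id.sub continuousWithinAt_const).inv₀ (sub_ne_zero.mpr hza))
          · exact ((hf.continuousOn.mono (by simp [closure_ball (0:ℂ) hR.ne'])) z hz).sub
              continuousWithinAt_const
        refine hslope.congr_of_eventuallyEq ?_ ?_
        · filter_upwards [eventually_nhdsWithin_of_eventually_nhds
            (eventually_ne_nhds hza)] with w hw
          rw [hg, dslope_of_ne f hw, slope_def_module]
        · rw [hg, dslope_of_ne f hza, slope_def_module]
    have hFd : DiffContOnCl ℂ F (Metric.ball 0 R) := by
      constructor
      · exact (((differentiable_const _).sub ((differentiable_const _).mul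
          differentiable_id)).div_const _).differentiableOn.mul hgd
      · rw [closure_ball (0 : ℂ) hR.ne']
        exact ((((continuous_const.sub (continuous_const.mul continuous_id)).div_const
          _).continuousOn).mul hgc)
    -- boundary bound: on the sphere |F z| = |f z| ≤ M
    have hFbd : ∀ z ∈ Metric.closedBall (0 : ℂ) R, ‖F z‖ ≤ M := by
      intro z hz
      have hz' : z ∈ closure (Metric.ball (0 : ℂ) R) := by
        rwa [closure_ball (0 : ℂ) hR.ne']
      have := Complex.norm_le_of_forall_mem_frontier_norm_le
        (Metric.isBounded_ball (x := (0:ℂ)) (r := R)) hFd (C := M) ?_ hz'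
      · exact this
      · intro w hw
        rw [frontier_ball (0 : ℂ) hR.ne'] at hw
        have hwR : ‖w‖ = R := by
          simpa [Complex.dist_eq] using hw
        have hwa : w ≠ a := by
          intro h; rw [h] at hwR; exact absurd hwR (ne_of_lt (lt_of_le_of_lt har hrR))
        have hwa' : w - a ≠ 0 := sub_ne_zero.mpr hwa
        have hgw : g w = (f w) / (w - a) := by
          rw [hg, dslope_of_ne f hwa, slope_def_module, hfa, sub_zero, smul_eq_mul,
            div_eq_inv_mul]
        -- identity: R² - ā w = w * conj (w - a) when |w| = R
        have hid : (R : ℂ) ^ 2 - (starRingEnd ℂ a) * w = w * (starRingEnd ℂ) (w - a) := by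
          have hww : w * (starRingEnd ℂ) w = (R : ℂ) ^ 2 := by
            rw [Complex.mul_conj]
            norm_cast
            rw [← Complex.sq_norm, hwR]
          rw [map_sub, mul_sub, hww]
          ring
        show ‖((R : ℂ) ^ 2 - (starRingEnd ℂ a) * w) / R * g w‖ ≤ M
        rw [hid, hgw]
        rw [norm_mul, norm_div, norm_mul]
        rw [Complex.norm_conj, norm_div]
        have hwaa : ‖w - a‖ ≠ 0 := norm_ne_zero_iff.mpr hwa'
        have hRne : ‖(R : ℂ)‖ = R := by
          simp [abs_of_pos hR]
        rw [hRne]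
        have : ‖w‖ * ‖w - a‖ / R *
            (‖f w‖ / ‖w - a‖) = ‖f w‖ := by
          rw [hwR]; field_simp
        rw [this]
        exact hbd w (by simp [Complex.dist_eq, hwR])
    -- zeros of F include s
    have hFzero : ∀ b ∈ s, ‖b‖ ≤ r ∧ F b = 0 := by
      intro b hb
      obtain ⟨hbr, hfb⟩ := hzero b (Finset.mem_insert_of_mem hb)
      refine ⟨hbr, ?_⟩
      have hba : b ≠ a := fun h => ha (h ▸ hb)
      have : g b = 0 := by
        rw [hg, dslope_of_ne f hba, slope_def_module, hfb, hfa, sub_zero, smul_zero]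
      simp [hF, this]
    have hIH := ih F hFd hFbd hFzero
    -- F 0 = R * f 0 / (-a)
    have haA : 0 < ‖a‖ := by simpa using ha0
    have hF0 : ‖F 0‖ = R / ‖a‖ * ‖f 0‖ := by
      have hg0 : g 0 = (0 - a)⁻¹ • (f 0 - f a) := by
        rw [hg, dslope_of_ne f (Ne.symm ha0), slope_def_module]
      rw [hF]
      simp only [mul_zero, sub_zero]
      rw [hg0, hfa, sub_zero, smul_eq_mul, zero_sub, norm_mul, norm_div, norm_mul, norm_inv,
        norm_neg]
      have hRne : ‖(R : ℂ)‖ = R := by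
        simp [abs_of_pos hR]
      rw [norm_pow, hRne]
      field_simp [hR.ne', haA.ne']
    have hcard : (insert a s).card = s.card + 1 := Finset.card_insert_of_notMem ha
    rw [hcard, pow_succ]
    have h1 : ‖f 0‖ = ‖a‖ / R * ‖F 0‖ := by
      rw [hF0]; field_simp [hR.ne', haA.ne']
    rw [h1]
    have h2 : ‖a‖ / R ≤ r / R := by gcongr
    calc ‖a‖ / R * ‖F 0‖
        ≤ (r / R) * (M * (r / R) ^ s.card) :=
          mul_le_mul h2 hIH (norm_nonneg _) (by positivity)
      _ = M * ((r / R) ^ s.card * (r / R)) := by ring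

/-- Jensen-type zero counting bound: if `f` is analytic on an open set containing the
closed ball of radius `R` about `0`, `f 0 ≠ 0`, and `|f| ≤ M` on that ball, then the
set of zeros of `f` in the closed ball of radius `r < R` is finite, and its cardinality
satisfies `card · log (R/r) ≤ log (M / |f 0|)`. -/
theorem jensen_zero_count (r R M : ℝ) (hr : 0 < r) (hrR : r < R) (hM : 0 < M)
    (f : ℂ → ℂ) (U : Set ℂ) (hU : IsOpen U)
    (hball : Metric.closedBall (0 : ℂ) R ⊆ U)
    (hf : ∀ z ∈ U, AnalyticAt ℂ f z)
    (hf0 : f 0 ≠ 0)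
    (hbd : ∀ z ∈ Metric.closedBall (0 : ℂ) R, ‖f z‖ ≤ M) :
    {z : ℂ | ‖z‖ ≤ r ∧ f z = 0}.Finite ∧
      ({z : ℂ | ‖z‖ ≤ r ∧ f z = 0}.ncard : ℝ) * Real.log (R / r)
        ≤ Real.log (M / ‖f 0‖) := by
  have hR : (0 : ℝ) < R := hr.trans hrR
  set Z := {z : ℂ | ‖z‖ ≤ r ∧ f z = 0} with hZ
  have hfd : DiffContOnCl ℂ f (Metric.ball 0 R) := by
    constructor
    · intro z hz
      exact ((hf z (hball (Metric.ball_subset_closedBall hz))).differentiableAt).differentiableWithinAt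
    · rw [closure_ball (0 : ℂ) hR.ne']
      intro z hz
      exact ((hf z (hball hz)).continuousAt).continuousWithinAt
  have habs0 : 0 < ‖f 0‖ := by simpa using hf0
  have hratio : r / R < 1 := (div_lt_one hR).mpr hrR
  have htend : Filter.Tendsto (fun n : ℕ => M * (r / R) ^ n) Filter.atTop (nhds 0) := by
    simpa using (tendsto_pow_atTop_nhds_zero_of_lt_one (by positivity) hratio).const_mul M
  obtain ⟨n, hn⟩ := (htend.eventually_lt_const habs0).exists
  have hfin : Z.Finite := by
    by_contra hinf
    obtain ⟨S, hSsub, hScard⟩ := Set.Infinite.exists_subset_card_eq hinf n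
    have hb := jensen_key hr hrR hM.le S f hfd hbd (fun a haS => hSsub haS)
    rw [hScard] at hb
    exact absurd (lt_of_le_of_lt hb hn) (lt_irrefl _)
  refine ⟨hfin, ?_⟩
  have hle := jensen_key hr hrR hM.le hfin.toFinset f hfd hbd
    (fun a haS => hfin.mem_toFinset.mp haS)
  rw [← Set.ncard_eq_toFinset_card Z hfin] at hle
  have hpow : (0 : ℝ) < (r / R) ^ Z.ncard := by positivity
  have h1 : Real.log (‖f 0‖) ≤
      Real.log M + (Z.ncard : ℝ) * (Real.log r - Real.log R) := by
    calc Real.log (‖f 0‖) ≤ Real.log (M * (r / R) ^ Z.ncard) :=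
          Real.log_le_log habs0 hle
      _ = Real.log M + (Z.ncard : ℝ) * (Real.log r - Real.log R) := by
          rw [Real.log_mul hM.ne' hpow.ne', Real.log_pow, Real.log_div hr.ne' hR.ne']
  rw [Real.log_div hM.ne' habs0.ne', Real.log_div hR.ne' hr.ne']
  have heq : (Z.ncard : ℝ) * (Real.log r - Real.log R) =
      -((Z.ncard : ℝ) * (Real.log R - Real.log r)) := by ring
  linarith [h1, heq]
end

section
/- Let 0 < ε₁ < ε₂ and let λ > 0, C ≥ 0 be real numbers. Let f : ℂ → ℂ be continuous and bounded on the closed strip {z : 0 ≤ Im z ≤ ε₂} and holomorphic on its interior. Assume |f(z)| ≤ exp(2ε₂λ) for every z with Im z = ε₂, and that there exists z₁ with Im z₁ = ε₁ and |f(z₁)| ≥ exp(−Cλ). Then the supremum of |f| over the real line {z : Im z = 0} is at least exp(−λ·ε₂·(C + 2ε₁)/(ε₂ − ε₁)). -/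
open Complex HadamardThreeLines Set


/-- Hadamard three-lines argument: if `f` is continuous and bounded on the closed strip
`0 ≤ Im z ≤ ε₂`, holomorphic on its interior, satisfies `|f| ≤ exp (2 ε₂ λ)` on the line
`Im z = ε₂`, and `|f z₁| ≥ exp (-C λ)` at some point `z₁` with `Im z₁ = ε₁`, then the
supremum of `|f|` over the real line is at least `exp (-λ ε₂ (C + 2 ε₁)/(ε₂ - ε₁))`. -/
theorem three_lines_lower_bound (ε₁ ε₂ lam C : ℝ)
    (hε₁ : 0 < ε₁) (hε : ε₁ < ε₂) (hlam : 0 < lam) (hC : 0 ≤ C)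
    (f : ℂ → ℂ)
    (hcont : ContinuousOn f {z : ℂ | 0 ≤ z.im ∧ z.im ≤ ε₂})
    (hbdd : BddAbove ((fun z => ‖f z‖) '' {z : ℂ | 0 ≤ z.im ∧ z.im ≤ ε₂}))
    (hdiff : DifferentiableOn ℂ f {z : ℂ | 0 < z.im ∧ z.im < ε₂})
    (hupper : ∀ z : ℂ, z.im = ε₂ → ‖f z‖ ≤ Real.exp (2 * ε₂ * lam))
    (hpt : ∃ z₁ : ℂ, z₁.im = ε₁ ∧ Real.exp (-C * lam) ≤ ‖f z₁‖) :
    Real.exp (-(lam * ε₂ * (C + 2 * ε₁) / (ε₂ - ε₁)))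
      ≤ sSup ((fun z => ‖f z‖) '' {z : ℂ | z.im = 0}) := by
  obtain ⟨z₁, hz₁im, hz₁⟩ := hpt
  have hε₂ : (0:ℝ) < ε₂ := hε₁.trans hε
  have hε₂' : (ε₂:ℂ) ≠ 0 := by exact_mod_cast hε₂.ne'
  set L : ℂ → ℂ := fun w => (ε₂ : ℂ) * Complex.I * w with hL
  have hLim : ∀ w : ℂ, (L w).im = ε₂ * w.re := by
    intro w
    simp [hL, Complex.mul_im, Complex.mul_re]
  set g : ℂ → ℂ := fun w => f (L w) with hg
  set S : ℝ := sSup ((fun z => ‖f z‖) '' {z : ℂ | z.im = 0}) with hS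
  -- the map into the strips
  have hmap_closed : ∀ w ∈ verticalClosedStrip 0 1, L w ∈ {z : ℂ | 0 ≤ z.im ∧ z.im ≤ ε₂} := by
    intro w hw
    obtain ⟨h0, h1⟩ := hw
    constructor
    · rw [hLim]; positivity
    · rw [hLim]; nlinarith
  have hmap_open : ∀ w ∈ verticalStrip 0 1, L w ∈ {z : ℂ | 0 < z.im ∧ z.im < ε₂} := by
    intro w hw
    obtain ⟨h0, h1⟩ := hw
    constructor
    · rw [hLim]; positivity
    · rw [hLim]; nlinarith
  have hLdiff : Differentiable ℂ L := by
    exact (differentiable_id.const_mul _)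
  have hd : DiffContOnCl ℂ g (verticalStrip 0 1) := by
    constructor
    · exact hdiff.comp (hLdiff.differentiableOn) hmap_open
    · apply (hcont.comp hLdiff.continuous.continuousOn)
      intro w hw
      apply hmap_closed
      have : closure (verticalStrip 0 1) ⊆ verticalClosedStrip 0 1 := by
        rw [verticalStrip, verticalClosedStrip]
        exact (closure_minimal (preimage_mono Ioo_subset_Icc_self)
          (IsClosed.preimage Complex.continuous_re isClosed_Icc))
      exact this hw
  have hB : BddAbove ((norm ∘ g) '' (verticalClosedStrip 0 1)) := by
    apply hbdd.mono
    rintro x ⟨w, hw, rfl⟩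
    exact ⟨L w, hmap_closed w hw, rfl⟩
  have hS0 : 0 ≤ S := by
    apply Real.sSup_nonneg
    rintro y ⟨z, _, rfl⟩
    exact norm_nonneg _
  have ha : ∀ w ∈ Complex.re ⁻¹' {(0:ℝ)}, ‖g w‖ ≤ S := by
    intro w hw
    apply le_csSup
    · apply hbdd.mono
      rintro x ⟨z, hz, rfl⟩
      exact ⟨z, ⟨le_of_eq hz.symm, by rw [hz]; exact hε₂.le⟩, rfl⟩
    · refine ⟨L w, ?_, rfl⟩
      simp only [Set.mem_setOf_eq, hLim]
      simp at hw
      simp [hw]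
  have hb : ∀ w ∈ Complex.re ⁻¹' {(1:ℝ)}, ‖g w‖ ≤ Real.exp (2 * ε₂ * lam) := by
    intro w hw
    apply hupper
    rw [hLim]
    simp at hw
    simp [hw]
  -- the point
  set w₁ : ℂ := z₁ / ((ε₂ : ℂ) * Complex.I) with hw₁
  have hLw₁ : L w₁ = z₁ := by
    rw [hw₁, hL]
    field_simp
  have hw₁re : w₁.re = ε₁ / ε₂ := by
    rw [hw₁]
    rw [div_re]
    simp [Complex.mul_re, Complex.mul_im, Complex.normSq_apply, hz₁im]
    field_simp
  set t : ℝ := ε₁ / ε₂ with ht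
  have ht0 : 0 < t := div_pos hε₁ hε₂
  have ht1 : t < 1 := (div_lt_one hε₂).mpr hε
  have hzmem : w₁ ∈ verticalClosedStrip 0 1 := by
    constructor <;> simp [hw₁re, ht0.le, ht1.le, le_of_lt ht0, le_of_lt ht1]
  have key := norm_le_interp_of_mem_verticalClosedStrip' (f := g) zero_lt_one hzmem hd hB ha hb
  simp only [sub_zero, div_one] at key
  rw [hw₁re] at key
  have hgz : ‖g w₁‖ = ‖f z₁‖ := by rw [hg]; simp [hLw₁]
  rw [hgz] at key
  -- now arithmetic
  have hexp : Real.exp (2 * ε₂ * lam) ^ t = Real.exp (2 * ε₁ * lam) := by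
    rw [← Real.exp_mul]
    congr 1
    rw [ht]
    field_simp
  rw [hexp] at key
  have key2 : Real.exp (-(C + 2 * ε₁) * lam) ≤ S ^ (1 - t) := by
    rw [show (-(C + 2*ε₁) * lam) = (-C * lam) - (2 * ε₁ * lam) by ring, Real.exp_sub,
      div_le_iff₀ (Real.exp_pos _)]
    exact hz₁.trans key
  have h1t : 0 < 1 - t := by linarith
  have key3 : Real.exp (-(C + 2 * ε₁) * lam) ^ (1/(1-t)) ≤ (S ^ (1-t)) ^ (1/(1-t)) :=
    Real.rpow_le_rpow (Real.exp_pos _).le key2 (by positivity)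
  rw [← Real.rpow_mul hS0, mul_one_div, div_self h1t.ne', Real.rpow_one,
    ← Real.exp_mul] at key3
  refine le_trans (le_of_eq ?_) key3
  congr 1
  have hne : ε₂ - ε₁ ≠ 0 := by linarith
  rw [ht]
  field_simp
end

section
/- Let X be a compact metric space, let μ and ν_j (j ∈ ℕ) be Borel probability measures on X, and assume that for every continuous function f : X → ℝ one has (1/N) · Σ_{j<N} ∫ f dν_j → ∫ f dμ as N → ∞. Let Γ ⊆ X be a closed set with μ(Γ) = 0, and let S ⊆ ℕ be an infinite set such that for every open set V ⊇ Γ, (1/#(S ∩ {0,…,N−1})) · Σ_{j ∈ S, j < N} ν_j(X \ V) → 0 as N → ∞. Then the upper natural density of S equals 0. -/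
open MeasureTheory

/-- Mass concentration on a null set forces density zero: let `μ`, `ν j` be Borel
probability measures on a compact metric space whose Cesàro averages of the `ν j`
converge weakly to `μ`, let `Γ` be closed with `μ Γ = 0`, and let `S ⊆ ℕ` be an infinite
set such that for every open `V ⊇ Γ` the Cesàro averages over `S` of `ν j (Vᶜ)` tend to
zero. Then the upper natural density of `S` is zero. -/
theorem density_zero_of_concentration {X : Type*} [MetricSpace X] [CompactSpace X]
    [MeasurableSpace X] [BorelSpace X]
    (μ : Measure X) (ν : ℕ → Measure X)
    [IsProbabilityMeasure μ] [∀ j, IsProbabilityMeasure (ν j)]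
    (hconv : ∀ f : C(X, ℝ), Filter.Tendsto
      (fun N => (∑ j ∈ Finset.range N, ∫ x, f x ∂(ν j)) / N) Filter.atTop
      (nhds (∫ x, f x ∂μ)))
    (Γ : Set X) (hΓ : IsClosed Γ) (hμΓ : μ Γ = 0)
    (S : Set ℕ) (hS : S.Infinite)
    (hconc : ∀ V : Set X, IsOpen V → Γ ⊆ V →
      Filter.Tendsto
        (fun N => (∑ j ∈ Finset.range N, S.indicator (fun i => ((ν i) Vᶜ).toReal) j)
          / ((S ∩ Set.Iio N).ncard : ℝ)) Filter.atTop (nhds 0)) :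
    Filter.limsup (fun N => ((S ∩ Set.Iio N).ncard : ℝ) / N) Filter.atTop = 0 := by
  classical
  set c : ℕ → ℝ := fun N => ((S ∩ Set.Iio N).ncard : ℝ) with hc
  -- c N as a sum of indicators
  have hcsum : ∀ N, c N = ∑ j ∈ Finset.range N, S.indicator (fun _ => (1 : ℝ)) j := by
    intro N
    have hset : S ∩ Set.Iio N = ↑((Finset.range N).filter (fun j => j ∈ S)) := by
      ext j; simp [and_comm]
    rw [hc]
    simp only [hset, Set.ncard_coe_finset]
    rw [Finset.sum_indicator_eq_sum_filter]
    simp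
  -- c is eventually positive
  obtain ⟨n₀, hn₀⟩ := hS.nonempty
  have hcpos : ∀ N, n₀ < N → 0 < c N := by
    intro N hN
    have hfin : (S ∩ Set.Iio N).Finite := (Set.finite_Iio N).inter_of_right _
    have hne : (S ∩ Set.Iio N).Nonempty := ⟨n₀, hn₀, hN⟩
    have := (Set.ncard_pos hfin).mpr hne
    simp only [hc]
    exact_mod_cast this
  -- it suffices to show the sequence tends to 0
  suffices h : Filter.Tendsto (fun N => c N / N) Filter.atTop (nhds 0) from h.limsup_eq
  rw [NormedAddCommGroup.tendsto_nhds_zero]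
  intro ε hε
  set δ : ℝ := min (ε / 9) (1 / 2) with hδdef
  have hδpos : 0 < δ := lt_min (by linarith) (by norm_num)
  have hδhalf : δ ≤ 1 / 2 := min_le_right _ _
  have hδε : 8 * δ < ε := by
    have : δ ≤ ε / 9 := min_le_left _ _
    linarith
  -- choose open V ⊇ Γ with μ V < δ
  obtain ⟨V, hΓV, hVopen, hμV⟩ := Set.exists_isOpen_lt_of_lt Γ (ENNReal.ofReal δ)
    (by rw [hμΓ]; exact ENNReal.ofReal_pos.mpr hδpos)
  -- Urysohn function: 0 on Vᶜ, 1 on Γ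
  obtain ⟨f, hf0, hf1, hf01⟩ := exists_continuous_zero_one_of_isClosed
    (isClosed_compl_iff.mpr hVopen) hΓ (by rwa [Set.disjoint_compl_left_iff_subset])
  -- the set V' where f > 1/2
  set V' : Set X := f ⁻¹' Set.Ioi (1 / 2) with hV'
  have hV'open : IsOpen V' := isOpen_Ioi.preimage f.continuous
  have hΓV' : Γ ⊆ V' := fun x hx => by
    simp only [hV', Set.mem_preimage, Set.mem_Ioi, hf1 hx]; norm_num
  -- integrability of f
  have hfint : ∀ (m : Measure X) [IsProbabilityMeasure m], Integrable (fun x => f x) m := by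
    intro m _
    exact f.continuous.integrable_of_hasCompactSupport (HasCompactSupport.of_compactSpace _)
  -- ∫ f dμ ≤ δ
  have hintμ : ∫ x, f x ∂μ ≤ δ := by
    have hmono : ∫ x, f x ∂μ ≤ ∫ x, V.indicator (fun _ => (1 : ℝ)) x ∂μ := by
      refine integral_mono (hfint μ) ((integrable_const (1 : ℝ)).indicator hVopen.measurableSet) ?_
      intro x
      by_cases hx : x ∈ V
      · simp only [Set.indicator_of_mem hx]; exact (hf01 x).2
      · simp only [Set.indicator_of_notMem hx]
        have : f x = 0 := hf0 hx
        simp [this]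
    have hind : ∫ x, V.indicator (fun _ => (1 : ℝ)) x ∂μ = (μ V).toReal := by
      rw [integral_indicator_const (1 : ℝ) hVopen.measurableSet]; simp; rfl
    have : (μ V).toReal ≤ δ := by
      have h := (ENNReal.toReal_lt_toReal (measure_ne_top μ V) ENNReal.ofReal_ne_top).mpr hμV
      rw [ENNReal.toReal_ofReal hδpos.le] at h
      exact h.le
    linarith [hmono, hind ▸ hmono]
  -- lower bound on ∫ f dν j
  have hlow : ∀ j, (1 / 2 : ℝ) * (1 - ((ν j) V'ᶜ).toReal) ≤ ∫ x, f x ∂(ν j) := by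
    intro j
    have hmono : ∫ x, V'.indicator (fun _ => (1 / 2 : ℝ)) x ∂(ν j) ≤ ∫ x, f x ∂(ν j) := by
      refine integral_mono ((integrable_const ((1 : ℝ) / 2)).indicator hV'open.measurableSet)
        (hfint (ν j)) ?_
      intro x
      by_cases hx : x ∈ V'
      · simp only [Set.indicator_of_mem hx]
        exact le_of_lt (by simpa [hV'] using hx)
      · simp only [Set.indicator_of_notMem hx]; exact (hf01 x).1
    rw [integral_indicator_const ((1 : ℝ) / 2) hV'open.measurableSet, smul_eq_mul] at hmono
    have hadd : ((ν j) V').toReal + ((ν j) V'ᶜ).toReal = 1 := by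
      rw [← ENNReal.toReal_add (measure_ne_top _ _) (measure_ne_top _ _),
        measure_add_measure_compl hV'open.measurableSet, measure_univ, ENNReal.toReal_one]
    have : (1 : ℝ) - ((ν j) V'ᶜ).toReal = ((ν j) V').toReal := by linarith
    rw [this]
    linarith [show (ν j).real V' = ((ν j) V').toReal from rfl]
  -- nonnegativity of ∫ f dν j
  have hnn : ∀ j, 0 ≤ ∫ x, f x ∂(ν j) := fun j =>
    integral_nonneg fun x => (hf01 x).1
  -- eventual estimates
  have hTc := hconc V' hV'open hΓV'
  set T : ℕ → ℝ := fun N => ∑ j ∈ Finset.range N, S.indicator (fun i => ((ν i) V'ᶜ).toReal) j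
    with hT
  have hTnn : ∀ N, 0 ≤ T N := fun N =>
    Finset.sum_nonneg fun j _ => Set.indicator_nonneg (fun _ _ => ENNReal.toReal_nonneg) j
  have hE1 : ∀ᶠ N in Filter.atTop, T N ≤ δ * c N := by
    filter_upwards [hTc.eventually_lt_const hδpos, Filter.eventually_gt_atTop n₀]
      with N hN hN'
    have hcN : 0 < c N := hcpos N hN'
    have : T N / c N < δ := hN
    calc T N = T N / c N * c N := by field_simp
      _ ≤ δ * c N := by nlinarith
  have hE2 : ∀ᶠ N in Filter.atTop,
      (∑ j ∈ Finset.range N, ∫ x, f x ∂(ν j)) / N < 2 * δ := by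
    refine (hconv f).eventually_lt_const ?_
    linarith
  -- key inequality: (1/2)(c N - T N) ≤ ∑_{j<N} ∫ f dν j
  have hkey : ∀ N, (1 / 2 : ℝ) * (c N - T N) ≤ ∑ j ∈ Finset.range N, ∫ x, f x ∂(ν j) := by
    intro N
    rw [hcsum N]
    have : (1 / 2 : ℝ) * ((∑ j ∈ Finset.range N, S.indicator (fun _ => (1 : ℝ)) j) - T N)
        = ∑ j ∈ Finset.range N,
          (1 / 2 : ℝ) * (S.indicator (fun _ => (1 : ℝ)) j
            - S.indicator (fun i => ((ν i) V'ᶜ).toReal) j) := by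
      rw [hT, ← Finset.sum_sub_distrib, Finset.mul_sum]
    rw [this]
    refine Finset.sum_le_sum fun j _ => ?_
    by_cases hj : j ∈ S
    · simp only [Set.indicator_of_mem hj]
      exact hlow j
    · simp only [Set.indicator_of_notMem hj, sub_zero, mul_zero, sub_self]
      exact hnn j
  -- conclude
  filter_upwards [hE1, hE2, Filter.eventually_gt_atTop n₀, Filter.eventually_gt_atTop 0]
    with N h1 h2 h3 h4
  have hcN : 0 < c N := hcpos N h3
  have hNpos : (0 : ℝ) < N := by exact_mod_cast h4
  have hsum : (1 / 2 : ℝ) * (1 - δ) * c N ≤ ∑ j ∈ Finset.range N, ∫ x, f x ∂(ν j) := by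
    have := hkey N
    nlinarith [h1]
  have hsumN : (∑ j ∈ Finset.range N, ∫ x, f x ∂(ν j)) < 2 * δ * N := by
    have := h2
    rw [div_lt_iff₀ hNpos] at this
    linarith
  have hcbound : c N < 8 * δ * N := by
    have h1δ : (1 / 2 : ℝ) ≤ 1 - δ := by linarith
    nlinarith
  have : c N / N < 8 * δ := by
    rw [div_lt_iff₀ hNpos]; linarith
  have hcNn : 0 ≤ c N / N := div_nonneg hcN.le hNpos.le
  rw [Real.norm_eq_abs, abs_of_nonneg hcNn]
  linarith
end
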